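/- Let θ_p = log(p(p+1)/2)/log p, N_p(u) = #{(m,n): m ≥ n ≥ 0, p ∤ C(m,n), m+n < u}, φ_p as above, and c_p(u) = N_p(u)/u^{θ_p}. Then for every positive integer u, lim_{k→∞} c_p(p^k u) = c_p(u) − φ_p(u−1)/(2 u^{θ_p}). -/

import Mathlib

open Filter

/-- `φ_p(q)`: number of points in Pascal's triangle mod `p` on the anti-diagonal `m + n = q`. -/
noncomputable def phi (p : ℕ) (q : ℤ) : ℕ :=
  {mn : ℕ × ℕ | mn.2 ≤ mn.1 ∧ (mn.1 : ℤ) + (mn.2 : ℤ) = q ∧ ¬ p ∣ Nat.choose mn.1 mn.2}.ncard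

/-- `N_p(u)`: number of `(m,n)` with `m ≥ n ≥ 0`, `p ∤ C(m,n)` and `m + n < u`. -/
noncomputable def Npas (p : ℕ) (u : ℕ) : ℕ :=
  {mn : ℕ × ℕ | mn.2 ≤ mn.1 ∧ mn.1 + mn.2 < u ∧ ¬ p ∣ Nat.choose mn.1 mn.2}.ncard

/-- `θ_p = log(p(p+1)/2)/log p`. -/
noncomputable def theta (p : ℕ) : ℝ := Real.log (p * (p + 1) / 2) / Real.log p

/-- `c_p(u) = N_p(u)/u^{θ_p}`. -/
noncomputable def cpas (p : ℕ) (u : ℕ) : ℝ := (Npas p u : ℝ) / (u : ℝ) ^ theta p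

open Finset

namespace CP
variable (p : ℕ)
def Fs (u : ℕ) : Finset (ℕ × ℕ) :=
  (range u ×ˢ range u).filter fun mn => mn.1 + mn.2 < u ∧ ¬ p ∣ Nat.choose mn.1 mn.2
def Gs (q : ℕ) : Finset (ℕ × ℕ) :=
  (range (q+1) ×ˢ range (q+1)).filter fun mn => mn.1 + mn.2 = q ∧ ¬ p ∣ Nat.choose mn.1 mn.2
def Dall : Finset (ℕ × ℕ) := (range p ×ˢ range p).filter fun st => st.2 ≤ st.1
def DA : Finset (ℕ × ℕ) := (Dall p).filter fun st => st.1 + st.2 < p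
def DB : Finset (ℕ × ℕ) := (Dall p).filter fun st => ¬ st.1 + st.2 < p
def DC : Finset (ℕ × ℕ) := (Dall p).filter fun st => st.1 + st.2 = p - 1
variable {p}

lemma mem_Fs {u : ℕ} {mn : ℕ × ℕ} :
    mn ∈ Fs p u ↔ mn.1 + mn.2 < u ∧ ¬ p ∣ Nat.choose mn.1 mn.2 := by
  simp only [Fs, mem_filter, mem_product, mem_range]
  exact ⟨by tauto, fun h => ⟨⟨by omega, by omega⟩, h⟩⟩

lemma mem_Gs {q : ℕ} {mn : ℕ × ℕ} :
    mn ∈ Gs p q ↔ mn.1 + mn.2 = q ∧ ¬ p ∣ Nat.choose mn.1 mn.2 := by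
  simp only [Gs, mem_filter, mem_product, mem_range]
  exact ⟨by tauto, fun h => ⟨⟨by omega, by omega⟩, h⟩⟩

lemma le_of_not_dvd (hp : p.Prime) {m n : ℕ} (h : ¬ p ∣ Nat.choose m n) : n ≤ m := by
  by_contra hlt
  exact h (by simp [Nat.choose_eq_zero_of_lt (not_le.mp hlt)])

lemma digit_not_dvd (hp : p.Prime) {s t : ℕ} (hs : s < p) (ht : t ≤ s) :
    ¬ p ∣ Nat.choose s t := fun h => by
  have hd : Nat.choose s t ∣ Nat.factorial s :=
    ⟨Nat.factorial t * Nat.factorial (s - t), by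
      rw [← mul_assoc, Nat.choose_mul_factorial_mul_factorial ht]⟩
  exact absurd (hp.dvd_factorial.mp (h.trans hd)) (not_le.mpr hs)

lemma lucas_iff (hp : p.Prime) (m n : ℕ) :
    ¬ p ∣ Nat.choose m n ↔ (n % p ≤ m % p ∧ ¬ p ∣ Nat.choose (m / p) (n / p)) := by
  have : Fact p.Prime := ⟨hp⟩
  have h := Choose.choose_modEq_choose_mod_mul_choose_div_nat (n := m) (k := n) (p := p)
  have hdvd : p ∣ Nat.choose m n ↔ p ∣ Nat.choose (m % p) (n % p) * Nat.choose (m / p) (n / p) := by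
    constructor <;> intro hd
    · exact (Nat.modEq_zero_iff_dvd).mp (h.symm.trans ((Nat.modEq_zero_iff_dvd).mpr hd))
    · exact (Nat.modEq_zero_iff_dvd).mp (h.trans ((Nat.modEq_zero_iff_dvd).mpr hd))
  rw [hdvd, hp.dvd_mul]
  constructor
  · intro h'
    push_neg at h'
    exact ⟨le_of_not_dvd hp h'.1, h'.2⟩
  · rintro ⟨h1, h2⟩
    push_neg
    exact ⟨digit_not_dvd hp (Nat.mod_lt _ hp.pos) h1, h2⟩

lemma unique_digits (hp0 : 0 < p) {a b r s : ℕ} (hr : r < p) (hs : s < p)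
    (h : p * a + r = p * b + s) : a = b ∧ r = s := by
  have h3 : (p * a + r) / p = a := by
    rw [Nat.mul_add_div hp0, Nat.div_eq_of_lt hr, add_zero]
  have h4 : (p * b + s) / p = b := by
    rw [Nat.mul_add_div hp0, Nat.div_eq_of_lt hs, add_zero]
  have hab : a = b := by rw [← h3, h, h4]
  exact ⟨hab, by subst hab; omega⟩

lemma Ffiber (hp : p.Prime) (u : ℕ) (hu : 1 ≤ u) (st : ℕ × ℕ)
    (hs : st.1 < p) (ht : st.2 < p) :
    ((Fs p (p*u)).filter fun mn => (mn.1 % p, mn.2 % p) = st).card =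
      if st.2 ≤ st.1 then
        (if st.1 + st.2 < p then (Fs p u).card else (Fs p (u-1)).card) else 0 := by
  obtain ⟨s, t⟩ := st
  simp only at hs ht ⊢
  have hp0 : 0 < p := hp.pos
  by_cases hts : t ≤ s
  · rw [if_pos hts]
    by_cases hstp : s + t < p
    · rw [if_pos hstp]
      apply card_nbij' (fun mn => (mn.1/p, mn.2/p)) (fun mn => (p*mn.1+s, p*mn.2+t))
      · rintro ⟨m, n⟩ hmn
        simp only [mem_coe, mem_filter, mem_Fs, Prod.mk.injEq] at hmn
        obtain ⟨⟨hlt, hdvd⟩, hms, hnt⟩ := hmn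
        rw [mem_coe, mem_Fs]
        refine ⟨?_, ((lucas_iff hp _ _).mp hdvd).2⟩
        have key : p * (m/p + n/p) < p * u := by
          calc p * (m/p + n/p) = p*(m/p) + p*(n/p) := mul_add _ _ _
          _ ≤ m + n := add_le_add (Nat.mul_div_le m p) (Nat.mul_div_le n p)
          _ < p * u := hlt
        exact lt_of_mul_lt_mul_left key (Nat.zero_le p)
      · rintro ⟨m', n'⟩ hmn
        rw [mem_coe, mem_Fs] at hmn
        obtain ⟨hlt, hdvd⟩ := hmn
        have hm : (p*m'+s) % p = s := by rw [Nat.mul_add_mod]; exact Nat.mod_eq_of_lt hs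
        have hn : (p*n'+t) % p = t := by rw [Nat.mul_add_mod]; exact Nat.mod_eq_of_lt ht
        have hmd : (p*m'+s) / p = m' := by
          rw [Nat.mul_add_div hp0, Nat.div_eq_of_lt hs, add_zero]
        have hnd : (p*n'+t) / p = n' := by
          rw [Nat.mul_add_div hp0, Nat.div_eq_of_lt ht, add_zero]
        simp only [mem_coe, mem_filter, mem_Fs, Prod.mk.injEq]
        refine ⟨⟨?_, ?_⟩, hm, hn⟩
        · calc (p*m'+s) + (p*n'+t) = p*(m'+n') + (s+t) := by ring
          _ < p*(m'+n') + p := by omega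
          _ = p*(m'+n'+1) := by ring
          _ ≤ p*u := Nat.mul_le_mul_left p (by omega)
        · rw [lucas_iff hp, hm, hn, hmd, hnd]
          exact ⟨hts, hdvd⟩
      · rintro ⟨m, n⟩ hmn
        simp only [mem_coe, mem_filter, Prod.mk.injEq] at hmn
        obtain ⟨-, hms, hnt⟩ := hmn
        rw [← hms, ← hnt]
        exact Prod.ext (Nat.div_add_mod m p) (Nat.div_add_mod n p)
      · rintro ⟨m', n'⟩ hmn
        have hmd : (p*m'+s) / p = m' := by
          rw [Nat.mul_add_div hp0, Nat.div_eq_of_lt hs, add_zero]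
        have hnd : (p*n'+t) / p = n' := by
          rw [Nat.mul_add_div hp0, Nat.div_eq_of_lt ht, add_zero]
        simp [hmd, hnd]
    · rw [if_neg hstp]
      apply card_nbij' (fun mn => (mn.1/p, mn.2/p)) (fun mn => (p*mn.1+s, p*mn.2+t))
      · rintro ⟨m, n⟩ hmn
        simp only [mem_coe, mem_filter, mem_Fs, Prod.mk.injEq] at hmn
        obtain ⟨⟨hlt, hdvd⟩, hms, hnt⟩ := hmn
        rw [mem_coe, mem_Fs]
        refine ⟨?_, ((lucas_iff hp _ _).mp hdvd).2⟩
        have em : p * (m/p) + s = m := by rw [← hms]; exact Nat.div_add_mod m p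
        have en : p * (n/p) + t = n := by rw [← hnt]; exact Nat.div_add_mod n p
        have key : p * (m/p + n/p + 1) < p * u := by
          calc p * (m/p + n/p + 1) = p*(m/p) + p*(n/p) + p := by ring
          _ ≤ p*(m/p) + p*(n/p) + (s + t) := by omega
          _ = (p*(m/p) + s) + (p*(n/p) + t) := by ring
          _ = m + n := by rw [em, en]
          _ < p * u := hlt
        have := lt_of_mul_lt_mul_left key (Nat.zero_le p)
        show m / p + n / p < u - 1
        omega
      · rintro ⟨m', n'⟩ hmn
        rw [mem_coe, mem_Fs] at hmn
        obtain ⟨hlt, hdvd⟩ := hmn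
        have hm : (p*m'+s) % p = s := by rw [Nat.mul_add_mod]; exact Nat.mod_eq_of_lt hs
        have hn : (p*n'+t) % p = t := by rw [Nat.mul_add_mod]; exact Nat.mod_eq_of_lt ht
        have hmd : (p*m'+s) / p = m' := by
          rw [Nat.mul_add_div hp0, Nat.div_eq_of_lt hs, add_zero]
        have hnd : (p*n'+t) / p = n' := by
          rw [Nat.mul_add_div hp0, Nat.div_eq_of_lt ht, add_zero]
        simp only [mem_coe, mem_filter, mem_Fs, Prod.mk.injEq]
        refine ⟨⟨?_, ?_⟩, hm, hn⟩
        · calc (p*m'+s) + (p*n'+t) = p*(m'+n') + (s+t) := by ring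
          _ < p*(m'+n') + (p+p) := by omega
          _ = p*(m'+n'+2) := by ring
          _ ≤ p*u := Nat.mul_le_mul_left p (by omega)
        · rw [lucas_iff hp, hm, hn, hmd, hnd]
          exact ⟨hts, hdvd⟩
      · rintro ⟨m, n⟩ hmn
        simp only [mem_coe, mem_filter, Prod.mk.injEq] at hmn
        obtain ⟨-, hms, hnt⟩ := hmn
        rw [← hms, ← hnt]
        exact Prod.ext (Nat.div_add_mod m p) (Nat.div_add_mod n p)
      · rintro ⟨m', n'⟩ hmn
        have hmd : (p*m'+s) / p = m' := by
          rw [Nat.mul_add_div hp0, Nat.div_eq_of_lt hs, add_zero]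
        have hnd : (p*n'+t) / p = n' := by
          rw [Nat.mul_add_div hp0, Nat.div_eq_of_lt ht, add_zero]
        simp [hmd, hnd]
  · rw [if_neg hts, card_eq_zero]
    ext ⟨m, n⟩
    simp only [mem_filter, mem_Fs, Prod.mk.injEq, notMem_empty, iff_false, not_and]
    rintro ⟨-, hdvd⟩ hms hnt
    exact hts (hms ▸ hnt ▸ ((lucas_iff hp _ _).mp hdvd).1)

lemma Gfiber (hp : p.Prime) (u : ℕ) (st : ℕ × ℕ) (hs : st.1 < p) (ht : st.2 < p) :
    ((Gs p (p*u+(p-1))).filter fun mn => (mn.1 % p, mn.2 % p) = st).card =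
      if st.2 ≤ st.1 ∧ st.1 + st.2 = p - 1 then (Gs p u).card else 0 := by
  obtain ⟨s, t⟩ := st
  simp only at hs ht ⊢
  have hp0 : 0 < p := hp.pos
  by_cases hc : t ≤ s ∧ s + t = p - 1
  · obtain ⟨hts, hst⟩ := hc
    rw [if_pos ⟨hts, hst⟩]
    apply card_nbij' (fun mn => (mn.1/p, mn.2/p)) (fun mn => (p*mn.1+s, p*mn.2+t))
    · rintro ⟨m, n⟩ hmn
      simp only [mem_coe, mem_filter, mem_Gs, Prod.mk.injEq] at hmn
      obtain ⟨⟨heq, hdvd⟩, hms, hnt⟩ := hmn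
      rw [mem_coe, mem_Gs]
      refine ⟨?_, ((lucas_iff hp _ _).mp hdvd).2⟩
      have em : p * (m/p) + s = m := by rw [← hms]; exact Nat.div_add_mod m p
      have en : p * (n/p) + t = n := by rw [← hnt]; exact Nat.div_add_mod n p
      have key : p * (m/p + n/p) + (s+t) = p * u + (p-1) := by
        calc p * (m/p + n/p) + (s+t) = (p*(m/p)+s) + (p*(n/p)+t) := by ring
        _ = m + n := by rw [em, en]
        _ = p * u + (p-1) := heq
      exact (unique_digits hp0 (by omega) (by omega) key).1
    · rintro ⟨m', n'⟩ hmn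
      rw [mem_coe, mem_Gs] at hmn
      obtain ⟨heq, hdvd⟩ := hmn
      have hm : (p*m'+s) % p = s := by rw [Nat.mul_add_mod]; exact Nat.mod_eq_of_lt hs
      have hn : (p*n'+t) % p = t := by rw [Nat.mul_add_mod]; exact Nat.mod_eq_of_lt ht
      have hmd : (p*m'+s) / p = m' := by
        rw [Nat.mul_add_div hp0, Nat.div_eq_of_lt hs, add_zero]
      have hnd : (p*n'+t) / p = n' := by
        rw [Nat.mul_add_div hp0, Nat.div_eq_of_lt ht, add_zero]
      simp only [mem_coe, mem_filter, mem_Gs, Prod.mk.injEq]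
      refine ⟨⟨?_, ?_⟩, hm, hn⟩
      · calc (p*m'+s) + (p*n'+t) = p*(m'+n') + (s+t) := by ring
        _ = p * u + (p-1) := by rw [heq, hst]
      · rw [lucas_iff hp, hm, hn, hmd, hnd]
        exact ⟨hts, hdvd⟩
    · rintro ⟨m, n⟩ hmn
      simp only [mem_coe, mem_filter, Prod.mk.injEq] at hmn
      obtain ⟨-, hms, hnt⟩ := hmn
      rw [← hms, ← hnt]
      exact Prod.ext (Nat.div_add_mod m p) (Nat.div_add_mod n p)
    · rintro ⟨m', n'⟩ hmn
      have hmd : (p*m'+s) / p = m' := by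
        rw [Nat.mul_add_div hp0, Nat.div_eq_of_lt hs, add_zero]
      have hnd : (p*n'+t) / p = n' := by
        rw [Nat.mul_add_div hp0, Nat.div_eq_of_lt ht, add_zero]
      simp [hmd, hnd]
  · rw [if_neg hc, card_eq_zero]
    ext ⟨m, n⟩
    simp only [mem_filter, mem_Gs, Prod.mk.injEq, notMem_empty, iff_false, not_and]
    rintro ⟨heq, hdvd⟩ hms hnt
    apply hc
    have hts : t ≤ s := hms ▸ hnt ▸ ((lucas_iff hp _ _).mp hdvd).1
    refine ⟨hts, ?_⟩
    have em : p * (m/p) + s = m := by rw [← hms]; exact Nat.div_add_mod m p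
    have en : p * (n/p) + t = n := by rw [← hnt]; exact Nat.div_add_mod n p
    have key : p * (m/p + n/p) + (s+t) = p * u + (p-1) := by
      calc p * (m/p + n/p) + (s+t) = (p*(m/p)+s) + (p*(n/p)+t) := by ring
      _ = m + n := by rw [em, en]
      _ = p * u + (p-1) := heq
    by_cases hstp : s + t < p
    · exact (unique_digits hp0 (by omega) (by omega) key).2
    · exfalso
      have key2 : p * (m/p + n/p + 1) + (s+t-p) = p * u + (p-1) := by
        rw [mul_add, mul_one, add_assoc]
        rw [show p + (s+t-p) = s+t by omega]
        exact key
      have := (unique_digits hp0 (by omega) (by omega) key2).2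
      omega
lemma Fstep (hp : p.Prime) (u : ℕ) (hu : 1 ≤ u) :
    (Fs p (p*u)).card = (DA p).card * (Fs p u).card + (DB p).card * (Fs p (u-1)).card := by
  rw [card_eq_sum_card_fiberwise (f := fun mn => (mn.1 % p, mn.2 % p))
      (t := range p ×ˢ range p)
      (fun mn _ => by simp [mem_product, Nat.mod_lt _ hp.pos])]
  have hcongr : ∑ st ∈ range p ×ˢ range p,
      ((Fs p (p*u)).filter fun mn => (mn.1 % p, mn.2 % p) = st).card =
      ∑ st ∈ range p ×ˢ range p, (if st.2 ≤ st.1 then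
        (if st.1 + st.2 < p then (Fs p u).card else (Fs p (u-1)).card) else 0) :=
    Finset.sum_congr rfl (fun st hst => by
      rw [mem_product, mem_range, mem_range] at hst
      exact Ffiber hp u hu st hst.1 hst.2)
  rw [hcongr, ← sum_filter]
  have hD : (range p ×ˢ range p).filter (fun st => st.2 ≤ st.1) = Dall p := rfl
  rw [hD, sum_ite, sum_const, sum_const, smul_eq_mul, smul_eq_mul]
  rfl

lemma Gstep (hp : p.Prime) (u : ℕ) :
    (Gs p (p*u+(p-1))).card = (DC p).card * (Gs p u).card := by
  rw [card_eq_sum_card_fiberwise (f := fun mn => (mn.1 % p, mn.2 % p))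
      (t := range p ×ˢ range p)
      (fun mn _ => by simp [mem_product, Nat.mod_lt _ hp.pos])]
  have hcongr : ∑ st ∈ range p ×ˢ range p,
      ((Gs p (p*u+(p-1))).filter fun mn => (mn.1 % p, mn.2 % p) = st).card =
      ∑ st ∈ range p ×ˢ range p,
        (if st.2 ≤ st.1 ∧ st.1 + st.2 = p - 1 then (Gs p u).card else 0) :=
    Finset.sum_congr rfl (fun st hst => by
      rw [mem_product, mem_range, mem_range] at hst
      exact Gfiber hp u st hst.1 hst.2)
  rw [hcongr, ← sum_filter, sum_const, smul_eq_mul]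
  congr 1
  rw [DC, Dall, filter_filter]

lemma Dall_card (hp : p.Prime) : 2 * (Dall p).card = p * (p + 1) := by
  have h : (Dall p).card = ∑ s ∈ range p, (s + 1) := by
    rw [Dall, card_eq_sum_card_fiberwise (f := Prod.fst) (t := range p)
      (fun st hst => by
        rw [mem_coe, mem_filter, mem_product] at hst
        exact hst.1.1)]
    refine Finset.sum_congr rfl (fun s hs => ?_)
    rw [mem_range] at hs
    rw [show (s:ℕ) + 1 = (range (s+1)).card from (card_range _).symm]
    apply card_nbij' (fun st => st.2) (fun t => (s, t))
    · rintro ⟨a, b⟩ hab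
      simp only [mem_coe, mem_filter, mem_product, mem_range] at hab ⊢
      omega
    · intro t htm
      simp only [mem_coe, mem_range] at htm
      simp only [mem_coe, mem_filter, mem_product, mem_range]
      constructor
      · omega
      · trivial
    · rintro ⟨a, b⟩ hab
      simp only [mem_coe, mem_filter, mem_product, mem_range] at hab
      obtain ⟨-, h2⟩ := hab
      simp [h2]
    · intro t _
      rfl
  rw [h, Finset.sum_add_distrib, Finset.sum_const, card_range, smul_eq_mul, mul_one]
  have h2 := Finset.sum_range_id_mul_two p
  cases p with
  | zero => simp
  | succ n =>
    rw [Nat.succ_sub_one] at h2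
    ring_nf
    ring_nf at h2
    linarith
lemma mem_Dall {st : ℕ × ℕ} : st ∈ Dall p ↔ st.1 < p ∧ st.2 < p ∧ st.2 ≤ st.1 := by
  simp only [Dall, mem_filter, mem_product, mem_range]
  tauto

lemma T_eq : (Dall p).card = (DA p).card + (DB p).card :=
  (Finset.card_filter_add_card_filter_not
    (p := fun st : ℕ × ℕ => st.1 + st.2 < p)).symm

lemma A_eq (hp : p.Prime) : (DA p).card = (DB p).card + (DC p).card := by
  have h1 : ((DA p).filter (fun st => st.1 + st.2 = p - 1)).card
      + ((DA p).filter (fun st => ¬ st.1 + st.2 = p - 1)).card = (DA p).card :=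
    Finset.card_filter_add_card_filter_not _
  have h2 : (DA p).filter (fun st => st.1 + st.2 = p - 1) = DC p := by
    rw [DA, DC, filter_filter]
    apply filter_congr
    intro st hst
    rw [mem_Dall] at hst
    constructor
    · tauto
    · intro h; exact ⟨by omega, h⟩
  have h3 : ((DA p).filter (fun st => ¬ st.1 + st.2 = p - 1)).card = (DB p).card := by
    apply card_nbij' (fun st => (p - 1 - st.2, p - 1 - st.1))
      (fun st => (p - 1 - st.2, p - 1 - st.1))
    · rintro ⟨s, t⟩ hst
      simp only [mem_coe, mem_filter, DA, mem_filter, mem_Dall] at hst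
      simp only [mem_coe, DB, mem_filter, mem_Dall]
      constructor
      · constructor
        · omega
        · constructor <;> omega
      · omega
    · rintro ⟨s, t⟩ hst
      simp only [mem_coe, DB, mem_filter, mem_Dall] at hst
      simp only [mem_coe, mem_filter, DA, mem_filter, mem_Dall]
      refine ⟨⟨⟨by omega, by omega, by omega⟩, by omega⟩, by omega⟩
    · rintro ⟨s, t⟩ hst
      simp only [mem_coe, mem_filter, DA, mem_filter, mem_Dall] at hst
      simp only [Prod.mk.injEq]
      omega
    · rintro ⟨s, t⟩ hst
      simp only [mem_coe, DB, mem_filter, mem_Dall] at hst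
      simp only [Prod.mk.injEq]
      omega
  have h2' := congrArg Finset.card h2
  omega

lemma B_pos (hp : p.Prime) : 0 < (DB p).card := by
  apply card_pos.mpr
  refine ⟨(p - 1, 1), ?_⟩
  have h2 := hp.two_le
  simp only [DB, mem_filter, mem_Dall]
  refine ⟨⟨by omega, by omega, by omega⟩, by omega⟩
lemma Fsucc (u : ℕ) : (Fs p (u+1)).card = (Fs p u).card + (Gs p u).card := by
  rw [← card_union_of_disjoint]
  · congr 1
    ext mn
    simp only [mem_union, mem_Fs, mem_Gs]
    by_cases h : p ∣ Nat.choose mn.1 mn.2 <;> simp [h] <;> omega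
  · rw [disjoint_left]
    intro mn h1 h2
    rw [mem_Fs] at h1; rw [mem_Gs] at h2
    omega

lemma Fstep_real (hp : p.Prime) (v : ℕ) (hv : 1 ≤ v) :
    ((Fs p (p*v)).card : ℝ) = ((Dall p).card : ℝ) * (Fs p v).card
      - ((DB p).card : ℝ) * (Gs p (v-1)).card := by
  have h1 : ((Fs p (p*v)).card : ℝ)
      = ((DA p).card : ℝ) * (Fs p v).card + ((DB p).card : ℝ) * (Fs p (v-1)).card := by
    exact_mod_cast congrArg (Nat.cast : ℕ → ℝ) (Fstep hp v hv)
  have h2 : ((Fs p v).card : ℝ) = ((Fs p (v-1)).card : ℝ) + ((Gs p (v-1)).card : ℝ) := by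
    have : (Fs p v).card = (Fs p (v-1)).card + (Gs p (v-1)).card := by
      conv_lhs => rw [show v = (v-1)+1 by omega]
      exact Fsucc (v-1)
    exact_mod_cast congrArg (Nat.cast : ℕ → ℝ) this
  have h3 : ((Dall p).card : ℝ) = ((DA p).card : ℝ) + ((DB p).card : ℝ) := by
    exact_mod_cast congrArg (Nat.cast : ℕ → ℝ) (T_eq (p := p))
  linear_combination h1 - ((Fs p v).card : ℝ) * h3 - ((DB p).card : ℝ) * h2

lemma Gpow (hp : p.Prime) (u : ℕ) (hu : 1 ≤ u) (k : ℕ) :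
    (Gs p (p^k * u - 1)).card = (DC p).card ^ k * (Gs p (u-1)).card := by
  induction k with
  | zero => simp
  | succ k ih =>
    have hpk : 1 ≤ p ^ k * u :=
      Nat.mul_pos (pow_pos hp.pos k) hu
    have h2 := hp.two_le
    have harg : p ^ (k+1) * u - 1 = p * (p^k * u - 1) + (p - 1) := by
      rw [show p^(k+1)*u = p*(p^k*u) by ring]
      zify [hpk, show (1:ℕ) ≤ p by omega, show (1:ℕ) ≤ p*(p^k*u) from
        Nat.one_le_iff_ne_zero.mpr (by positivity)]
      ring
    rw [harg, Gstep hp, ih, pow_succ]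
    ring

lemma Fpow (hp : p.Prime) (u : ℕ) (hu : 1 ≤ u) (k : ℕ) :
    ((Fs p (p^k * u)).card : ℝ) = ((Dall p).card : ℝ)^k * (Fs p u).card
      - ((DB p).card : ℝ) * (Gs p (u-1)).card *
          ∑ j ∈ range k, ((DC p).card : ℝ)^j * ((Dall p).card : ℝ)^(k-1-j) := by
  induction k with
  | zero => simp
  | succ k ih =>
    have hpk : 1 ≤ p ^ k * u := Nat.mul_pos (pow_pos hp.pos k) hu
    rw [show p^(k+1)*u = p*(p^k*u) by ring, Fstep_real hp _ hpk, ih]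
    have hG : ((Gs p (p^k*u - 1)).card : ℝ)
        = ((DC p).card : ℝ) ^ k * ((Gs p (u-1)).card : ℝ) := by
      exact_mod_cast congrArg (Nat.cast : ℕ → ℝ) (Gpow hp u hu k)
    rw [hG, sum_range_succ]
    have hexp : ∀ j, (k+1)-1-j = k-j := fun j => by omega
    simp only [hexp, Nat.sub_self, pow_zero, mul_one]
    have hsum : ((Dall p).card:ℝ) * ∑ j ∈ range k, ((DC p).card:ℝ)^j * ((Dall p).card:ℝ)^(k-1-j)
        = ∑ j ∈ range k, ((DC p).card:ℝ)^j * ((Dall p).card:ℝ)^(k-j) := by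
      rw [mul_sum]
      refine sum_congr rfl fun j hj => ?_
      rw [mem_range] at hj
      rw [show k - j = (k-1-j)+1 by omega, pow_succ]
      ring
    linear_combination (-((DB p).card:ℝ) * ((Gs p (u-1)).card:ℝ)) * hsum
lemma Npas_eq (hp : p.Prime) (u : ℕ) : Npas p u = (Fs p u).card := by
  rw [Npas, show {mn : ℕ × ℕ | mn.2 ≤ mn.1 ∧ mn.1 + mn.2 < u ∧ ¬ p ∣ Nat.choose mn.1 mn.2}
      = ↑(Fs p u) from ?_, Set.ncard_coe_finset]
  ext ⟨m, n⟩
  simp only [Set.mem_setOf_eq, Finset.coe_sort_coe, Finset.mem_coe, mem_Fs]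
  exact ⟨fun ⟨h1, h2, h3⟩ => ⟨h2, h3⟩, fun ⟨h2, h3⟩ => ⟨le_of_not_dvd hp h3, h2, h3⟩⟩

lemma phi_eq (hp : p.Prime) (v : ℕ) : phi p (v : ℤ) = (Gs p v).card := by
  rw [phi, show {mn : ℕ × ℕ | mn.2 ≤ mn.1 ∧ (mn.1 : ℤ) + (mn.2 : ℤ) = (v : ℤ)
      ∧ ¬ p ∣ Nat.choose mn.1 mn.2} = ↑(Gs p v) from ?_, Set.ncard_coe_finset]
  ext ⟨m, n⟩
  simp only [Set.mem_setOf_eq, Finset.mem_coe, mem_Gs]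
  constructor
  · rintro ⟨h1, h2, h3⟩
    exact ⟨by exact_mod_cast h2, h3⟩
  · rintro ⟨h2, h3⟩
    exact ⟨le_of_not_dvd hp h3, by exact_mod_cast h2, h3⟩

end CP

theorem cpas_tendsto (p : ℕ) (hp : p.Prime) (u : ℕ) (hu : 0 < u) :
    Tendsto (fun k : ℕ => cpas p (p ^ k * u)) atTop
      (nhds (cpas p u - (phi p ((u : ℤ) - 1) : ℝ) / (2 * (u : ℝ) ^ theta p))) := by
  classical
  have hp2 := hp.two_le
  set T : ℝ := ((CP.Dall p).card : ℝ) with hTdef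
  set B : ℝ := ((CP.DB p).card : ℝ) with hBdef
  set C : ℝ := ((CP.DC p).card : ℝ) with hCdef
  set F : ℝ := ((CP.Fs p u).card : ℝ) with hFdef
  set G : ℝ := ((CP.Gs p (u-1)).card : ℝ) with hGdef
  set X : ℝ := (u : ℝ) ^ theta p with hXdef
  have hT2 : 2 * T = (p : ℝ) * ((p : ℝ) + 1) := by
    rw [hTdef]
    exact_mod_cast congrArg (Nat.cast : ℕ → ℝ) (CP.Dall_card hp)
  have hTpos : 0 < T := by nlinarith [hp2, show (2:ℝ) ≤ (p:ℝ) from by exact_mod_cast hp2]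
  have hBpos : 0 < B := by
    rw [hBdef]
    exact_mod_cast CP.B_pos hp
  have hC0 : 0 ≤ C := by rw [hCdef]; positivity
  have hTBC : T = 2 * B + C := by
    have h1 : ((CP.Dall p).card : ℝ) = ((CP.DA p).card : ℝ) + ((CP.DB p).card : ℝ) := by
      exact_mod_cast congrArg (Nat.cast : ℕ → ℝ) (CP.T_eq (p := p))
    have h2 : ((CP.DA p).card : ℝ) = ((CP.DB p).card : ℝ) + ((CP.DC p).card : ℝ) := by
      exact_mod_cast congrArg (Nat.cast : ℕ → ℝ) (CP.A_eq hp)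
    rw [hTdef, hBdef, hCdef, h1, h2]; ring
  have hCT : C / T < 1 := by
    rw [div_lt_one hTpos]; linarith
  have hXpos : 0 < X := by
    rw [hXdef]
    exact Real.rpow_pos_of_pos (by exact_mod_cast hu) _
  have hppos : (0:ℝ) < (p:ℝ) := by exact_mod_cast hp.pos
  have hpT : (p : ℝ) ^ theta p = T := by
    rw [theta, Real.rpow_def_of_pos hppos, mul_comm, div_mul_cancel₀]
    · rw [Real.exp_log (by nlinarith)]
      linarith [hT2]
    · exact Real.log_ne_zero_of_pos_of_ne_one hppos (by exact_mod_cast hp.one_lt.ne')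
  have hden : ∀ k : ℕ, ((p^k*u : ℕ) : ℝ) ^ theta p = T^k * X := by
    intro k
    push_cast
    rw [Real.mul_rpow (by positivity) (by positivity), hXdef]
    congr 1
    have hk : ((p:ℝ)^(k:ℕ))^theta p = ((p:ℝ)^theta p)^(k:ℕ) := by
      rw [← Real.rpow_natCast (p:ℝ) k, ← Real.rpow_mul hppos.le, mul_comm,
        Real.rpow_mul hppos.le, Real.rpow_natCast]
    rw [hk, hpT]
  have hform : ∀ k : ℕ, cpas p (p^k*u)
      = F / X - (B * G / (T * X)) * ∑ j ∈ range k, (C/T)^j := by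
    intro k
    have hFk : ((Npas p (p^k*u)) : ℝ)
        = T^k * F - B * G * ∑ j ∈ range k, C^j * T^(k-1-j) := by
      rw [CP.Npas_eq hp]
      exact CP.Fpow hp u hu k
    rw [cpas, hFk, hden k]
    rcases Nat.eq_zero_or_pos k with hk | hk
    · subst hk; simp
    · have hsum : ∑ j ∈ range k, C^j * T^(k-1-j)
          = T^(k-1) * ∑ j ∈ range k, (C/T)^j := by
        rw [mul_sum]
        refine Finset.sum_congr rfl fun j hj => ?_
        rw [mem_range] at hj
        rw [div_pow, mul_div_assoc']
        rw [eq_div_iff (by positivity)]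
        rw [mul_assoc, ← pow_add, show (k-1-j)+j = k-1 by omega]
        ring
      rw [hsum]
      have hTk : T^k = T * T^(k-1) := by
        rw [← pow_succ', show k - 1 + 1 = k by omega]
      rw [hTk]
      field_simp
  have hgeo : Tendsto (fun k : ℕ => ∑ j ∈ range k, (C/T)^j) atTop
      (nhds (1 - C/T)⁻¹) :=
    (hasSum_geometric_of_lt_one (by positivity) hCT).tendsto_sum_nat
  have hmain : Tendsto (fun k : ℕ => F / X - (B * G / (T * X)) * ∑ j ∈ range k, (C/T)^j)
      atTop (nhds (F / X - (B * G / (T * X)) * (1 - C/T)⁻¹)) :=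
    tendsto_const_nhds.sub (hgeo.const_mul _)
  have hval : F / X - (B * G / (T * X)) * (1 - C/T)⁻¹
      = cpas p u - (phi p ((u : ℤ) - 1) : ℝ) / (2 * (u : ℝ) ^ theta p) := by
    have hphi : ((phi p ((u : ℤ) - 1)) : ℝ) = G := by
      rw [show (u : ℤ) - 1 = ((u - 1 : ℕ) : ℤ) by omega, CP.phi_eq hp, hGdef]
    have hcu : cpas p u = F / X := by
      rw [cpas, CP.Npas_eq hp, hFdef, hXdef]
    rw [hphi, hcu, ← hXdef]
    have h1 : (1 - C/T) = 2*B/T := by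
      field_simp
      linarith
    rw [h1, inv_div]
    field_simp
  rw [← hval]
  exact hmain.congr fun k => (hform k).symm
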